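/- arXiv:2312.13003 — 2 statements merged into one kernel-verified Lean document; each statement's English description precedes it below -/
import Mathlib

section
/- Let E be an effect algebra equipped with a compression base (J_p)_{p∈P} that has the projection cover property. Then for every a∈E, the projection cover a° belongs to the P-bicommutant P(a). -/
universe u

/-- An effect algebra: the partially defined sum `⊕` is encoded via `Option`. -/
class EffectAlgebra (E : Type u) where
  oplus : E → E → Option E
  zero : E
  one : E
  oplus_comm : ∀ a b : E, oplus a b = oplus b a
  oplus_assoc : ∀ {a b c ab abc : E}, oplus a b = some ab → oplus ab c = some abc →
    ∃ bc : E, oplus b c = some bc ∧ oplus a bc = some abc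
  exists_perp : ∀ a : E, ∃ b : E, oplus a b = some one
  perp_unique : ∀ {a b c : E}, oplus a b = some one → oplus a c = some one → b = c
  oplus_one : ∀ {a b : E}, oplus a one = some b → a = zero

namespace EffectAlgebra

variable {E : Type u} [EffectAlgebra E]

/-- The orthosupplement `a^⊥`. -/
noncomputable def perp (a : E) : E := Classical.choose (exists_perp a)

/-- The partial order: `a ≤ b` iff `a ⊕ c = b` for some `c`. -/
def le (a b : E) : Prop := ∃ c : E, oplus a c = some b

/-- Sharp elements. -/
def Sharp (a : E) : Prop := ∀ x : E, le x a → le x (perp a) → x = zero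

/-- Finite orthosums of lists of elements. -/
def osum : List E → Option E
  | [] => some zero
  | a :: l => (osum l).bind fun s => oplus a s

/-- Mackey compatibility `a ↔ b`. -/
def MCompat (a b : E) : Prop :=
  ∃ a₁ b₁ c s t : E, oplus a₁ b₁ = some s ∧ oplus s c = some t ∧
    oplus a₁ c = some a ∧ oplus b₁ c = some b

/-- `a` is the supremum of the sequence `f`. -/
def IsSupSeq (f : ℕ → E) (a : E) : Prop :=
  (∀ n, le (f n) a) ∧ ∀ b : E, (∀ n, le (f n) b) → le a b

/-- `a` is the infimum of the sequence `f`. -/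
def IsInfSeq (f : ℕ → E) (a : E) : Prop :=
  (∀ n, le a (f n)) ∧ ∀ b : E, (∀ n, le b (f n)) → le b a

/-- `a` is the infimum of the set `S`. -/
def IsInfSet (S : Set E) (a : E) : Prop :=
  (∀ x ∈ S, le a x) ∧ ∀ b : E, (∀ x ∈ S, le b x) → le b a

/-- `a` is the supremum of `f` computed inside the subset `S`. -/
def IsSupSeqIn (S : Set E) (f : ℕ → E) (a : E) : Prop :=
  a ∈ S ∧ (∀ n, le (f n) a) ∧ ∀ b ∈ S, (∀ n, le (f n) b) → le a b

variable (E) in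
/-- Monotone σ-completeness: every ascending sequence has a supremum. -/
def MonotoneSigmaComplete : Prop :=
  ∀ f : ℕ → E, (∀ n, le (f n) (f (n + 1))) → ∃ a : E, IsSupSeq f a

end EffectAlgebra

open EffectAlgebra in
/-- A compression base `(J_p)_{p ∈ P}` on an effect algebra. -/
structure CompressionBase (E : Type u) [EffectAlgebra E] where
  P : Set E
  J : E → E → E
  zero_mem : zero ∈ P
  one_mem : one ∈ P
  perp_mem : ∀ p ∈ P, perp p ∈ P
  oplus_mem : ∀ p ∈ P, ∀ q ∈ P, ∀ r : E, oplus p q = some r → r ∈ P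
  normal : ∀ e f d s t x y : E, oplus e f = some s → oplus s d = some t →
    oplus e d = some x → x ∈ P → oplus f d = some y → y ∈ P → d ∈ P
  additive : ∀ p ∈ P, ∀ a b c : E, oplus a b = some c →
    oplus (J p a) (J p b) = some (J p c)
  retraction : ∀ p ∈ P, ∀ a : E, le a p → J p a = a
  focus : ∀ p ∈ P, J p one = p
  compression : ∀ p ∈ P, ∀ a : E, (J p a = zero ↔ le a (perp p))
  compose : ∀ p ∈ P, ∀ q ∈ P, ∀ r ∈ P, ∀ s t qr : E,
    oplus p q = some s → oplus s r = some t → oplus q r = some qr →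
    ∀ a : E, J s (J qr a) = J q a

namespace CompressionBase

open EffectAlgebra

variable {E : Type u} [EffectAlgebra E] (cb : CompressionBase E)

/-- The commutant `C(p)` of a projection `p`. -/
noncomputable def Cset (p : E) : Set E :=
  {a : E | oplus (cb.J p a) (cb.J (perp p) a) = some a}

/-- `PC(a)`: projections compatible with `a`. -/
noncomputable def PC (a : E) : Set E := {p : E | p ∈ cb.P ∧ a ∈ cb.Cset p}

/-- The P-bicommutant `P(a) = PC(PC(a) ∪ {a})`. -/
noncomputable def Pbicomm (a : E) : Set E :=
  {p : E | p ∈ cb.P ∧ a ∈ cb.Cset p ∧ ∀ q ∈ cb.PC a, q ∈ cb.Cset p}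

/-- `p` is the projection cover of `a`. -/
def IsProjCover (a p : E) : Prop :=
  p ∈ cb.P ∧ ∀ q ∈ cb.P, (le a q ↔ le p q)

/-- The projection cover property. -/
def ProjCoverProp : Prop := ∀ a : E, ∃ p : E, cb.IsProjCover a p

/-- `B` is a Boolean subalgebra of the set of projections. -/
noncomputable def BooleanSub (B : Set E) : Prop :=
  B ⊆ cb.P ∧ zero ∈ B ∧ one ∈ B ∧ (∀ p ∈ B, perp p ∈ B) ∧
  (∀ p ∈ B, ∀ q ∈ B, MCompat p q) ∧
  (∀ p ∈ B, ∀ q ∈ B, ∀ r : E, oplus p q = some r → r ∈ B)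

/-- The b-property. -/
noncomputable def BProperty : Prop :=
  ∀ a : E, ∃ B : Set E, cb.BooleanSub B ∧
    ∀ p ∈ cb.P, (a ∈ cb.Cset p ↔ ∀ b ∈ B, b ∈ cb.Cset p)

/-- Commutativity `aCb` of b-elements. -/
noncomputable def CommuteC (a b : E) : Prop :=
  ∀ p ∈ cb.Pbicomm a, ∀ q ∈ cb.Pbicomm b, MCompat p q

/-- The b-comparability property. -/
noncomputable def BComparability : Prop :=
  cb.BProperty ∧
  ∀ e f : E, cb.CommuteC e f → ∃ p : E, p ∈ cb.Pbicomm e ∧ p ∈ cb.Pbicomm f ∧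
    le (cb.J p e) (cb.J p f) ∧ le (cb.J (perp p) f) (cb.J (perp p) e)

/-- Spectrality: projection cover property plus b-comparability. -/
noncomputable def Spectral : Prop := cb.ProjCoverProp ∧ cb.BComparability

/-- `p` is the floor of `a` (the largest projection below `a`). -/
def IsFloor (a p : E) : Prop :=
  p ∈ cb.P ∧ le p a ∧ ∀ q ∈ cb.P, le q a → le q p

end CompressionBase

open EffectAlgebra in
/-- A sequential effect algebra (SEA). -/
class SEA (E : Type u) [EffectAlgebra E] where
  seq : E → E → E
  seq_oplus : ∀ a b c d : E, oplus b c = some d →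
    oplus (seq a b) (seq a c) = some (seq a d)
  one_seq : ∀ a : E, seq one a = a
  seq_zero_symm : ∀ a b : E, seq a b = zero → seq b a = zero
  comm_perp : ∀ a b : E, seq a b = seq b a → seq a (perp b) = seq (perp b) a
  comm_assoc : ∀ a b c : E, seq a b = seq b a → seq a (seq b c) = seq (seq a b) c
  comm_seq : ∀ a b c : E, seq c a = seq a c → seq c b = seq b c →
    seq c (seq a b) = seq (seq a b) c
  comm_oplus : ∀ a b c d : E, seq c a = seq a c → seq c b = seq b c →
    oplus a b = some d → seq c d = seq d c

namespace EffectAlgebra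

variable {E : Type u} [EffectAlgebra E]

section SEAdefs

variable [SEA E]

/-- `a | b` : the sequential product commutes. -/
def Commutes (a b : E) : Prop := SEA.seq a b = SEA.seq b a

/-- The commutant `S'` of a subset. -/
def commutant (S : Set E) : Set E := {a : E | ∀ s ∈ S, Commutes a s}

/-- The bicommutant `S''`. -/
def bicommutant (S : Set E) : Set E := commutant (commutant S)

/-- A sub-SEA: a sub-effect algebra closed under the sequential product. -/
noncomputable def SubSEA (S : Set E) : Prop :=
  zero ∈ S ∧ one ∈ S ∧ (∀ a ∈ S, perp a ∈ S) ∧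
  (∀ a ∈ S, ∀ b ∈ S, ∀ c : E, oplus a b = some c → c ∈ S) ∧
  (∀ a ∈ S, ∀ b ∈ S, SEA.seq a b ∈ S)

/-- A commutative sub-SEA. -/
noncomputable def CommSubSEA (S : Set E) : Prop :=
  SubSEA S ∧ ∀ a ∈ S, ∀ b ∈ S, Commutes a b

/-- A maximal commutative sub-SEA. -/
noncomputable def MaxCommSubSEA (S : Set E) : Prop :=
  CommSubSEA S ∧ ∀ T : Set E, CommSubSEA T → S ⊆ T → T = S

/-- `C(p)` for the canonical compression base `J_p = p ∘ ·` of a SEA. -/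
noncomputable def sC (p : E) : Set E :=
  {a : E | oplus (SEA.seq p a) (SEA.seq (perp p) a) = some a}

/-- `PC(a)` for the canonical compression base. -/
noncomputable def sPC (a : E) : Set E := {p : E | Sharp p ∧ a ∈ sC p}

/-- The P-bicommutant `P(a)` for the canonical compression base. -/
noncomputable def sPbicomm (a : E) : Set E :=
  {p : E | Sharp p ∧ a ∈ sC p ∧ ∀ q ∈ sPC a, q ∈ sC p}

/-- `p` is the projection cover of `a` (canonical compression base). -/
noncomputable def sIsProjCover (a p : E) : Prop :=
  Sharp p ∧ ∀ q : E, Sharp q → (le a q ↔ le p q)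

variable (E) in
/-- The projection cover property (canonical compression base). -/
noncomputable def sProjCoverProp : Prop := ∀ a : E, ∃ p : E, sIsProjCover a p

/-- `B` is a Boolean subalgebra of the sharp elements. -/
noncomputable def sBooleanSub (B : Set E) : Prop :=
  (∀ p ∈ B, Sharp p) ∧ zero ∈ B ∧ one ∈ B ∧ (∀ p ∈ B, perp p ∈ B) ∧
  (∀ p ∈ B, ∀ q ∈ B, MCompat p q) ∧
  (∀ p ∈ B, ∀ q ∈ B, ∀ r : E, oplus p q = some r → r ∈ B)

variable (E) in
/-- The b-property (canonical compression base). -/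
noncomputable def sBProperty : Prop :=
  ∀ a : E, ∃ B : Set E, sBooleanSub B ∧
    ∀ p : E, Sharp p → (a ∈ sC p ↔ ∀ b ∈ B, b ∈ sC p)

/-- `aCb` (canonical compression base). -/
noncomputable def sCommuteC (a b : E) : Prop :=
  ∀ p ∈ sPbicomm a, ∀ q ∈ sPbicomm b, MCompat p q

variable (E) in
/-- The b-comparability property (canonical compression base). -/
noncomputable def sBComparability : Prop :=
  sBProperty E ∧
  ∀ e f : E, sCommuteC e f → ∃ p : E, p ∈ sPbicomm e ∧ p ∈ sPbicomm f ∧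
    le (SEA.seq p e) (SEA.seq p f) ∧
    le (SEA.seq (perp p) f) (SEA.seq (perp p) e)

variable (E) in
/-- Spectrality of a SEA with respect to its canonical compression base. -/
noncomputable def sSpectral : Prop := sProjCoverProp E ∧ sBComparability E

/-- `p` is the floor of `a` (canonical compression base). -/
noncomputable def sIsFloor (a p : E) : Prop :=
  Sharp p ∧ le p a ∧ ∀ q : E, Sharp q → le q a → le q p

variable (E) in
/-- Property A. -/
def PropertyA : Prop :=
  ∀ (f : ℕ → E) (a b : E), (∀ n, le (f n) (f (n + 1))) →
    (∀ m n, Commutes (f m) (f n)) → IsSupSeq f a →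
    (∀ n, Commutes (f n) b) → Commutes a b

variable (E) in
/-- A σ-SEA. -/
def SigmaSEA : Prop :=
  MonotoneSigmaComplete E ∧
  ∀ (f : ℕ → E) (m : E), (∀ n, le (f (n + 1)) (f n)) → IsInfSeq f m →
    ∀ b : E, IsInfSeq (fun n => SEA.seq b (f n)) (SEA.seq b m) ∧
      ((∀ n, Commutes b (f n)) → Commutes b m)

/-- Iterated sequential powers: `seqPow a n = a^(n+1)`. -/
def seqPow (a : E) : ℕ → E
  | 0 => a
  | n + 1 => SEA.seq a (seqPow a n)

end SEAdefs

end EffectAlgebra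

open EffectAlgebra in
/-- A convex effect algebra: scalar multiplication by reals in `[0,1]`. -/
class ConvexEA (E : Type u) [EffectAlgebra E] where
  smul : ℝ → E → E
  smul_smul : ∀ (l m : ℝ) (a : E), 0 ≤ l → l ≤ 1 → 0 ≤ m → m ≤ 1 →
    smul m (smul l a) = smul (l * m) a
  smul_add_coeff : ∀ (l m : ℝ) (a : E), 0 ≤ l → 0 ≤ m → l + m ≤ 1 →
    oplus (smul l a) (smul m a) = some (smul (l + m) a)
  smul_oplus : ∀ (l : ℝ) (a b c : E), 0 ≤ l → l ≤ 1 → oplus a b = some c →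
    oplus (smul l a) (smul l b) = some (smul l c)
  one_smul : ∀ a : E, smul 1 a = a

namespace EffectAlgebra

variable {E : Type u} [EffectAlgebra E]

section Convexdefs

variable [ConvexEA E]

variable (E) in
/-- Strong archimedeanity. -/
def StronglyArchimedean : Prop :=
  ∀ a b c : E,
    (∀ n : ℕ, ∃ d : E, oplus b (ConvexEA.smul (1 / (n + 1) : ℝ) c) = some d ∧ le a d) →
    le a b

/-- `DistLE a b ε` encodes `‖a - b‖ ≤ ε` in the order unit norm:
`(1/2)a ≤ (1/2)b ⊕ (ε/2)1` and symmetrically (with `ε` clamped to `[0,1]`). -/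
def DistLE (a b : E) (ε : ℝ) : Prop :=
  (∃ d : E, oplus (ConvexEA.smul (2⁻¹ : ℝ) b) (ConvexEA.smul (min ε 1 / 2) one) = some d ∧
    le (ConvexEA.smul (2⁻¹ : ℝ) a) d) ∧
  (∃ d : E, oplus (ConvexEA.smul (2⁻¹ : ℝ) a) (ConvexEA.smul (min ε 1 / 2) one) = some d ∧
    le (ConvexEA.smul (2⁻¹ : ℝ) b) d)

/-- Norm convergence of a sequence. -/
def NormLimit (f : ℕ → E) (a : E) : Prop :=
  ∀ ε : ℝ, 0 < ε → ∃ N : ℕ, ∀ n ≥ N, DistLE (f n) a ε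

/-- Cauchy sequences with respect to the order unit norm. -/
def CauchySeqE (f : ℕ → E) : Prop :=
  ∀ ε : ℝ, 0 < ε → ∃ N : ℕ, ∀ m ≥ N, ∀ n ≥ N, DistLE (f m) (f n) ε

variable (E) in
/-- Norm completeness. -/
def NormComplete : Prop := ∀ f : ℕ → E, CauchySeqE f → ∃ a : E, NormLimit f a

/-- A norm-closed subset. -/
def NormClosedSet (S : Set E) : Prop :=
  ∀ (f : ℕ → E) (a : E), (∀ n, f n ∈ S) → NormLimit f a → a ∈ S

/-- A norm-complete subset. -/
def NormCompleteSet (S : Set E) : Prop :=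
  ∀ f : ℕ → E, (∀ n, f n ∈ S) → CauchySeqE f → ∃ a ∈ S, NormLimit f a

/-- One-dimensional elements. -/
def OneDim (a : E) : Prop :=
  ∀ b : E, le b a → ∃ t : ℝ, 0 ≤ t ∧ t ≤ 1 ∧ b = ConvexEA.smul t a

/-- `l` is a representation of `a` as a simple element:
`a = ⊕ μ_i p_i` with `μ_i ∈ [0,1]`, `p_i` sharp and `⊕ p_i = 1`. -/
noncomputable def SimpleRep (a : E) (l : List (ℝ × E)) : Prop :=
  (∀ x ∈ l, x.1 ∈ Set.Icc (0 : ℝ) 1 ∧ Sharp x.2) ∧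
  osum (l.map Prod.snd) = some one ∧
  osum (l.map fun x => ConvexEA.smul x.1 x.2) = some a

/-- Simple elements. -/
noncomputable def SimpleElem (a : E) : Prop := ∃ l : List (ℝ × E), SimpleRep a l

/-- A reduced representation: strictly increasing coefficients, nonzero sharp elements. -/
noncomputable def ReducedRep (a : E) (l : List (ℝ × E)) : Prop :=
  SimpleRep a l ∧ (l.map Prod.fst).Chain' (· < ·) ∧ ∀ x ∈ l, x.2 ≠ zero

end Convexdefs

section SpecRes

variable [SEA E] [ConvexEA E]

/-- `p` is the spectral resolution of `a` (canonical compression base): a family of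
projections in the bicommutant of `a`, nondecreasing and right continuous on `[0,1]`,
with `J_{p_λ}(a) ≤ λ p_λ` and `λ p_λ^⊥ ≤ J_{p_λ^⊥}(a)`. -/
noncomputable def sIsSpecRes (a : E) (p : ℝ → E) : Prop :=
  (∀ l : ℝ, 0 ≤ l → l ≤ 1 → p l ∈ sPbicomm a) ∧
  (∀ l m : ℝ, 0 ≤ l → l ≤ m → m ≤ 1 → le (p l) (p m)) ∧
  (∀ l : ℝ, 0 ≤ l → l < 1 →
    IsInfSet {x : E | ∃ m : ℝ, l < m ∧ m ≤ 1 ∧ x = p m} (p l)) ∧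
  (∀ l : ℝ, 0 ≤ l → l ≤ 1 →
    le (SEA.seq (p l) a) (ConvexEA.smul l (p l)) ∧
    le (ConvexEA.smul l (perp (p l))) (SEA.seq (perp (p l)) a))

end SpecRes

end EffectAlgebra

namespace CompressionBase

open EffectAlgebra

variable {E : Type u} [EffectAlgebra E] [ConvexEA E] (cb : CompressionBase E)

/-- `p` is the spectral resolution of `a` with respect to the compression base `cb`. -/
noncomputable def IsSpecRes (a : E) (p : ℝ → E) : Prop :=
  (∀ l : ℝ, 0 ≤ l → l ≤ 1 → p l ∈ cb.Pbicomm a) ∧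
  (∀ l m : ℝ, 0 ≤ l → l ≤ m → m ≤ 1 → le (p l) (p m)) ∧
  (∀ l : ℝ, 0 ≤ l → l < 1 →
    IsInfSet {x : E | ∃ m : ℝ, l < m ∧ m ≤ 1 ∧ x = p m} (p l)) ∧
  (∀ l : ℝ, 0 ≤ l → l ≤ 1 →
    le (cb.J (p l) a) (ConvexEA.smul l (p l)) ∧
    le (ConvexEA.smul l (perp (p l))) (cb.J (perp (p l)) a))

end CompressionBase

namespace EffectAlgebra

variable {E : Type u} [EffectAlgebra E]

lemma perp_spec' (a : E) : oplus a (perp a) = some one :=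
  Classical.choose_spec (exists_perp a)

lemma one_oplus_zero' : oplus (one : E) zero = some one := by
  obtain ⟨b, hb⟩ := exists_perp (one : E)
  have hb' : oplus b (one : E) = some one := by rw [oplus_comm]; exact hb
  have h0 : b = (zero : E) := oplus_one hb'
  rw [h0] at hb; exact hb

lemma perp_oplus_zero' (a : E) : oplus (perp a) zero = some (perp a) := by
  obtain ⟨bc, h1, h2⟩ := oplus_assoc (perp_spec' a) one_oplus_zero'
  have h := perp_unique (perp_spec' a) h2
  rw [← h] at h1; exact h1

lemma perp_perp' (a : E) : perp (perp a) = a := by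
  have h1 := perp_spec' (perp a)
  have h2 : oplus (perp a) a = some one := by rw [oplus_comm]; exact perp_spec' a
  exact perp_unique h1 h2

lemma oplus_zero' (a : E) : oplus a zero = some a := by
  have h := perp_oplus_zero' (perp a)
  rwa [perp_perp'] at h

lemma zero_oplus' (a : E) : oplus zero a = some a := by
  rw [oplus_comm]; exact oplus_zero' a

lemma ea_le_refl (a : E) : le a a := ⟨zero, oplus_zero' a⟩

lemma ea_zero_le (a : E) : le zero a := ⟨a, zero_oplus' a⟩

lemma ea_le_one (a : E) : le a one := ⟨perp a, perp_spec' a⟩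

lemma cancel' {a b c d : E} (h1 : oplus a b = some d) (h2 : oplus a c = some d) :
    b = c := by
  have hd := perp_spec' d
  obtain ⟨be, hbe, habe⟩ := oplus_assoc h1 hd
  obtain ⟨ce, hce, hace⟩ := oplus_assoc h2 hd
  have hbece : be = ce := perp_unique habe hace
  have hba : oplus be a = some one := by rw [oplus_comm]; exact habe
  obtain ⟨ea, hea, hbea⟩ := oplus_assoc hbe hba
  have hce' : oplus c (perp d) = some be := by rw [hbece]; exact hce
  obtain ⟨ea2, hea2, hcea⟩ := oplus_assoc hce' hba
  have heq : ea2 = ea := by rw [hea] at hea2; exact (Option.some.inj hea2).symm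
  have hb1 : oplus ea b = some one := by rw [oplus_comm]; exact hbea
  have hc1 : oplus ea c = some one := by
    rw [heq] at hcea; rw [oplus_comm]; exact hcea
  exact perp_unique hb1 hc1

lemma assoc'' {a b c bc abc : E} (h1 : oplus b c = some bc)
    (h2 : oplus a bc = some abc) :
    ∃ ab, oplus a b = some ab ∧ oplus ab c = some abc := by
  have h1' : oplus c b = some bc := by rw [oplus_comm]; exact h1
  have h2' : oplus bc a = some abc := by rw [oplus_comm]; exact h2
  obtain ⟨x, hx, hcx⟩ := oplus_assoc h1' h2'
  exact ⟨x, by rw [oplus_comm]; exact hx, by rw [oplus_comm]; exact hcx⟩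

lemma ea_le_trans {a b c : E} (h1 : le a b) (h2 : le b c) : le a c := by
  obtain ⟨x, hx⟩ := h1; obtain ⟨y, hy⟩ := h2
  obtain ⟨xy, _, h⟩ := oplus_assoc hx hy
  exact ⟨xy, h⟩

lemma sub_cancel' {r w s pp u : E} (h1 : oplus r w = some pp) (h2 : le pp u)
    (h3 : oplus r s = some u) : le w s := by
  obtain ⟨e, he⟩ := h2
  obtain ⟨f, hwf, hrf⟩ := oplus_assoc h1 he
  have hfs := cancel' hrf h3
  exact ⟨e, by rw [hfs] at hwf; exact hwf⟩

lemma le_oplus_mono {a b r s u : E} (h1 : le a r) (h2 : le b s)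
    (hu : oplus r s = some u) : ∃ c, oplus a b = some c ∧ le c u := by
  obtain ⟨c₁, hc₁⟩ := h1
  obtain ⟨c₂, hc₂⟩ := h2
  obtain ⟨v, hv, hav⟩ := oplus_assoc hc₁ hu
  have hv' : oplus s c₁ = some v := by rw [oplus_comm]; exact hv
  obtain ⟨g, _, hbg⟩ := oplus_assoc hc₂ hv'
  obtain ⟨ab, hab, habg⟩ := assoc'' hbg hav
  exact ⟨ab, hab, ⟨g, habg⟩⟩

lemma oplus_defined_of_le_perp' {q x : E} (h : le x (perp q)) :
    ∃ t, oplus q x = some t := by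
  obtain ⟨c, hc⟩ := h
  obtain ⟨qx, hqx, _⟩ := assoc'' hc (perp_spec' q)
  exact ⟨qx, hqx⟩

lemma le_perp_of_oplus' {p y t : E} (h : oplus p y = some t) : le y (perp p) :=
  sub_cancel' h (ea_le_one t) (perp_spec' p)

end EffectAlgebra

namespace CompressionBase

open EffectAlgebra

variable {E : Type u} [EffectAlgebra E] (cb : CompressionBase E)

lemma J_le_focus' {p : E} (hp : p ∈ cb.P) (a : E) : le (cb.J p a) p := by
  have h := cb.additive p hp a (perp a) one (perp_spec' a)
  rw [cb.focus p hp] at h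
  exact ⟨cb.J p (perp a), h⟩

lemma mem_Cset_of_decomp' {p x y q : E} (hp : p ∈ cb.P)
    (hxy : oplus x y = some q) (hx : le x p) (hy : le y (perp p)) :
    q ∈ cb.Cset p := by
  have hp' : perp p ∈ cb.P := cb.perp_mem p hp
  have hJpx : cb.J p x = x := cb.retraction p hp x hx
  have hJpy : cb.J p y = zero := (cb.compression p hp y).mpr hy
  have hJp'x : cb.J (perp p) x = zero := by
    refine (cb.compression (perp p) hp' x).mpr ?_
    rwa [perp_perp']
  have hJp'y : cb.J (perp p) y = y := cb.retraction (perp p) hp' y hy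
  have h1 := cb.additive p hp x y q hxy
  rw [hJpx, hJpy, oplus_zero'] at h1
  have h2 := cb.additive (perp p) hp' x y q hxy
  rw [hJp'x, hJp'y, zero_oplus'] at h2
  show oplus (cb.J p q) (cb.J (perp p) q) = some q
  rw [← Option.some.inj h1, ← Option.some.inj h2]
  exact hxy

end CompressionBase

open EffectAlgebra in
/-- In an effect algebra with a compression base having the projection
cover property, the projection cover of any element belongs to its P-bicommutant. -/
theorem stmt0 {E : Type u} [EffectAlgebra E] (cb : CompressionBase E)
    (hpc : cb.ProjCoverProp) (a p : E) (hp : cb.IsProjCover a p) :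
    p ∈ cb.Pbicomm a := by
  obtain ⟨hpP, hcov⟩ := hp
  have hap : le a p := (hcov p hpP).mpr (ea_le_refl p)
  refine ⟨hpP, cb.mem_Cset_of_decomp' hpP (oplus_zero' a) hap (ea_zero_le (perp p)), ?_⟩
  intro q hq
  obtain ⟨hqP, hqC'⟩ := hq
  have hqC : oplus (cb.J q a) (cb.J (perp q) a) = some a := hqC'
  have hqP' : perp q ∈ cb.P := cb.perp_mem q hqP
  have ha₁q : le (cb.J q a) q := cb.J_le_focus' hqP a
  have ha₂q' : le (cb.J (perp q) a) (perp q) := cb.J_le_focus' hqP' a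
  obtain ⟨r, hrP, hrcov⟩ := hpc (cb.J q a)
  obtain ⟨s, hsP, hscov⟩ := hpc (cb.J (perp q) a)
  have ha₁r : le (cb.J q a) r := (hrcov r hrP).mpr (ea_le_refl r)
  have ha₂s : le (cb.J (perp q) a) s := (hscov s hsP).mpr (ea_le_refl s)
  have hrq : le r q := (hrcov q hqP).mp ha₁q
  have hsq' : le s (perp q) := (hscov (perp q) hqP').mp ha₂q'
  obtain ⟨t0, hqs⟩ := oplus_defined_of_le_perp' hsq'
  obtain ⟨u, hrs, _⟩ := le_oplus_mono hrq (ea_le_refl s) hqs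
  have huP : u ∈ cb.P := cb.oplus_mem r hrP s hsP u hrs
  obtain ⟨a', haa', hau⟩ := le_oplus_mono ha₁r ha₂s hrs
  have ha'a : a' = a := by rw [hqC] at haa'; exact (Option.some.inj haa').symm
  rw [ha'a] at hau
  have hpu : le p u := (hcov u huP).mp hau
  have ha₁p : le (cb.J q a) p := ea_le_trans ⟨cb.J (perp q) a, hqC⟩ hap
  obtain ⟨w, hrw⟩ := (hrcov p hpP).mp ha₁p
  have hrp : le r p := ⟨w, hrw⟩
  have hws : le w s := sub_cancel' hrw hpu hrs
  obtain ⟨y, hry⟩ := hrq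
  have hwq' : le w (perp q) := ea_le_trans hws hsq'
  obtain ⟨t, hqw⟩ := oplus_defined_of_le_perp' hwq'
  have hyr : oplus y r = some q := by rw [oplus_comm]; exact hry
  obtain ⟨bc, hbc, hybc⟩ := oplus_assoc hyr hqw
  have hbcp : bc = p := by rw [hrw] at hbc; exact (Option.some.inj hbc).symm
  rw [hbcp] at hybc
  have hyp' : le y (perp p) := le_perp_of_oplus' (by rw [oplus_comm]; exact hybc)
  exact cb.mem_Cset_of_decomp' hpP hry hrp hyp'
end

section
/- Let E be a strongly archimedean convex SEA with property A. Then for all a,b∈E and λ∈[0,1]: a∘(λb)=(λa)∘b=λ(a∘b); consequently, if a|b then a|(λb). -/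
universe u

namespace Stmt7Aux

open EffectAlgebra

section EA
variable {E : Type u} [EffectAlgebra E]

lemma perp_spec (a : E) : oplus a (perp a) = some one :=
  Classical.choose_spec (exists_perp a)

lemma perp_spec' (a : E) : oplus (perp a) a = some one := by
  rw [oplus_comm]; exact perp_spec a

lemma one_oplus_zero : oplus (one : E) zero = some one := by
  obtain ⟨b, hb⟩ := exists_perp (one : E)
  have hb' : oplus b one = some one := by rw [oplus_comm]; exact hb
  have hz := oplus_one hb'
  rwa [hz] at hb

lemma perp_oplus_zero (a : E) : oplus (perp a) zero = some (perp a) := by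
  obtain ⟨bc, h1, h2⟩ := oplus_assoc (perp_spec a) one_oplus_zero
  have hb : bc = perp a := (perp_unique (perp_spec a) h2).symm
  rw [hb] at h1; exact h1

lemma perp_perp (a : E) : perp (perp a) = a :=
  perp_unique (perp_spec (perp a)) (perp_spec' a)

lemma oplus_zero' (a : E) : oplus a zero = some a := by
  have h := perp_oplus_zero (perp a)
  rwa [perp_perp] at h

lemma zero_oplus' (a : E) : oplus zero a = some a := by
  rw [oplus_comm]; exact oplus_zero' a

lemma cancel_left {a b c d : E} (h1 : oplus a c = some d) (h2 : oplus b c = some d) : a = b := by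
  obtain ⟨e1, he1, ha⟩ := oplus_assoc h1 (perp_spec d)
  obtain ⟨e2, he2, hb⟩ := oplus_assoc h2 (perp_spec d)
  have he : e1 = e2 := by rw [he1] at he2; exact Option.some.inj he2
  subst he
  have ha' : oplus e1 a = some one := by rw [oplus_comm]; exact ha
  have hb' : oplus e1 b = some one := by rw [oplus_comm]; exact hb
  exact perp_unique ha' hb'

lemma cancel_right {a b c d : E} (h1 : oplus c a = some d) (h2 : oplus c b = some d) : a = b := by
  rw [oplus_comm] at h1 h2
  exact cancel_left h1 h2

lemma oplus_assoc'' {a b c bc t : E} (h1 : oplus b c = some bc) (h2 : oplus a bc = some t) :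
    ∃ ab, oplus a b = some ab ∧ oplus ab c = some t := by
  rw [oplus_comm] at h1 h2
  obtain ⟨ba, hba, h3⟩ := oplus_assoc h1 h2
  rw [oplus_comm] at hba h3
  exact ⟨ba, hba, h3⟩

lemma le_refl' (a : E) : le a a := ⟨zero, oplus_zero' a⟩
lemma le_zero (a : E) : le zero a := ⟨a, zero_oplus' a⟩
lemma le_one' (a : E) : le a one := ⟨perp a, perp_spec a⟩

lemma le_trans' {a b c : E} (h1 : le a b) (h2 : le b c) : le a c := by
  obtain ⟨x, hx⟩ := h1; obtain ⟨y, hy⟩ := h2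
  obtain ⟨z, _, hz⟩ := oplus_assoc hx hy
  exact ⟨z, hz⟩

lemma le_oplus_le {a a' b b' t : E} (h1 : le a a') (h2 : le b b') (h3 : oplus a' b' = some t) :
    ∃ s : E, oplus a b = some s ∧ le s t := by
  obtain ⟨x, hx⟩ := h1
  obtain ⟨w, hw⟩ := h2
  obtain ⟨s1, hs1, has1⟩ := oplus_assoc hx h3
  obtain ⟨xb, hxb, hxbw⟩ := oplus_assoc'' hw hs1
  obtain ⟨s3, has3, hs3w⟩ := oplus_assoc'' hxbw has1
  have hbx : oplus b x = some xb := by rw [oplus_comm]; exact hxb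
  obtain ⟨ab, hab, habx⟩ := oplus_assoc'' hbx has3
  obtain ⟨xw, _, habxw⟩ := oplus_assoc habx hs3w
  exact ⟨ab, hab, ⟨xw, habxw⟩⟩

lemma eq_zero_of_oplus_zero {c d : E} (h : oplus c d = some zero) : c = zero := by
  obtain ⟨s, hs, _⟩ := oplus_assoc h (zero_oplus' one)
  have hd : d = zero := oplus_one hs
  subst hd
  have h2 := oplus_zero' c
  rw [h] at h2
  exact (Option.some.inj h2).symm

lemma le_antisymm' {a b : E} (h1 : le a b) (h2 : le b a) : a = b := by
  obtain ⟨c, hc⟩ := h1; obtain ⟨d, hd⟩ := h2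
  obtain ⟨e, he, hae⟩ := oplus_assoc hc hd
  have he0 : e = zero := cancel_right hae (oplus_zero' a)
  subst he0
  have hc0 : c = zero := eq_zero_of_oplus_zero he
  subst hc0
  rw [oplus_zero' a] at hc
  exact Option.some.inj hc

end EA

section Convex
variable {E : Type u} [EffectAlgebra E] [ConvexEA E]

open ConvexEA

lemma smul_zero_right (l : ℝ) (h0 : 0 ≤ l) (h1 : l ≤ 1) : smul l (zero : E) = zero := by
  have h := smul_oplus l (zero:E) zero zero h0 h1 (zero_oplus' zero)
  exact cancel_left h (zero_oplus' (smul l zero))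

lemma smul_zero_coeff (a : E) : smul (0:ℝ) a = zero := by
  have h := smul_add_coeff 0 1 a le_rfl zero_le_one (by norm_num)
  rw [show (0:ℝ)+1 = 1 by norm_num] at h
  rw [ConvexEA.one_smul] at h
  exact cancel_left h (zero_oplus' a)

lemma smul_le_coeff {s t : ℝ} (a : E) (hs : 0 ≤ s) (hst : s ≤ t) (ht : t ≤ 1) :
    le (smul s a) (smul t a) := by
  have h := smul_add_coeff s (t - s) a hs (by linarith) (by linarith)
  rw [show s + (t - s) = t by ring] at h
  exact ⟨_, h⟩

lemma smul_le_elem {a b : E} (l : ℝ) (h0 : 0 ≤ l) (h1 : l ≤ 1) (h : le a b) :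
    le (smul l a) (smul l b) := by
  obtain ⟨c, hc⟩ := h
  exact ⟨smul l c, smul_oplus l a c b h0 h1 hc⟩

lemma half_add (x : E) : oplus (smul (2⁻¹:ℝ) x) (smul (2⁻¹:ℝ) x) = some x := by
  have h := smul_add_coeff 2⁻¹ 2⁻¹ x (by norm_num) (by norm_num) (by norm_num)
  rw [show (2⁻¹:ℝ)+2⁻¹ = 1 by norm_num, ConvexEA.one_smul] at h
  exact h

lemma double_le {u v : E} (h : le (smul (2⁻¹:ℝ) u) (smul (2⁻¹:ℝ) v)) : le u v := by
  obtain ⟨s, hs, hle⟩ := le_oplus_le h h (half_add v)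
  have hsu : s = u := Option.some.inj (hs.symm.trans (half_add u))
  exact hsu ▸ hle

lemma arch_master (harch : StronglyArchimedean E) {u v : E}
    (H : ∀ m : ℕ, ∃ (y : E) (t r : ℝ), 0 ≤ t ∧ t ≤ 1 ∧ 0 ≤ r ∧ r ≤ 1 ∧
      t ≤ r + 1/(m+1) ∧ le u (smul t y) ∧ le (smul r y) v) : le u v := by
  apply double_le
  apply harch (smul (2⁻¹:ℝ) u) (smul (2⁻¹:ℝ) v) (smul (2⁻¹:ℝ) one)
  intro m
  have hm0 : (0:ℝ) < (m:ℝ) + 1 := by positivity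
  have hm1 : (1:ℝ)/((m:ℝ)+1) ≤ 1 := by
    rw [div_le_one hm0]; exact le_add_of_nonneg_left (Nat.cast_nonneg m)
  have hm2 : (0:ℝ) ≤ 1/((m:ℝ)+1) := by positivity
  obtain ⟨y, t, r, ht0, ht1, hr0, hr1, htr, huy, hrv⟩ := H m
  -- the element d
  have heq : smul ((1:ℝ)/(m+1)) (smul (2⁻¹:ℝ) (one:E)) = smul ((2⁻¹:ℝ) * (1/(m+1))) one :=
    ConvexEA.smul_smul 2⁻¹ (1/(m+1)) one (by norm_num) (by norm_num) hm2 hm1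
  have hsmall : le (smul ((2⁻¹:ℝ) * (1/((m:ℝ)+1))) (one:E)) (smul (2⁻¹:ℝ) (one:E)) :=
    smul_le_coeff one (by positivity) (by nlinarith) (by norm_num)
  obtain ⟨d, hd, _⟩ := le_oplus_le (smul_le_elem 2⁻¹ (by norm_num) (by norm_num) (le_one' v))
    hsmall (half_add (one:E))
  refine ⟨d, by rw [heq]; exact hd, ?_⟩
  -- now show smul 2⁻¹ u ≤ d
  have c1 : le (smul (2⁻¹:ℝ) u) (smul (2⁻¹:ℝ) (smul t y)) :=
    smul_le_elem 2⁻¹ (by norm_num) (by norm_num) huy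
  have c2 : smul (2⁻¹:ℝ) (smul t y) = smul (t * 2⁻¹) y :=
    ConvexEA.smul_smul t 2⁻¹ y ht0 ht1 (by norm_num) (by norm_num)
  have c3 : le (smul (t * 2⁻¹) y) (smul (r * 2⁻¹ + 2⁻¹ * (1/((m:ℝ)+1))) y) :=
    smul_le_coeff y (by positivity) (by nlinarith) (by nlinarith)
  have c4 := smul_add_coeff (r * 2⁻¹) ((2⁻¹:ℝ) * (1/((m:ℝ)+1))) y
    (by positivity) (by positivity) (by nlinarith)
  have c5 : smul (r * (2⁻¹:ℝ)) y = smul (2⁻¹:ℝ) (smul r y) :=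
    (ConvexEA.smul_smul r 2⁻¹ y hr0 hr1 (by norm_num) (by norm_num)).symm
  have c6 : le (smul (r * (2⁻¹:ℝ)) y) (smul (2⁻¹:ℝ) v) := by
    rw [c5]; exact smul_le_elem 2⁻¹ (by norm_num) (by norm_num) hrv
  have c7 : le (smul ((2⁻¹:ℝ) * (1/((m:ℝ)+1))) y) (smul ((2⁻¹:ℝ) * (1/((m:ℝ)+1))) (one:E)) :=
    smul_le_elem _ (by positivity) (by nlinarith) (le_one' y)
  obtain ⟨s, hs, hsd⟩ := le_oplus_le c6 c7 hd
  have hss : s = smul (r * 2⁻¹ + 2⁻¹ * (1/((m:ℝ)+1))) y := Option.some.inj (hs.symm.trans c4)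
  exact le_trans' c1 (le_trans' (c2 ▸ le_trans' c3 (hss ▸ hsd)) (le_refl' _))

end Convex

section SEAbasic
variable {E : Type u} [EffectAlgebra E] [SEA E]

lemma seq_zero' (a : E) : SEA.seq a (zero:E) = zero := by
  have h := SEA.seq_oplus a zero zero zero (zero_oplus' zero)
  exact cancel_left h (zero_oplus' (SEA.seq a zero))

lemma zero_seq' (a : E) : SEA.seq (zero:E) a = zero := SEA.seq_zero_symm a zero (seq_zero' a)

lemma perp_zero' : perp (zero : E) = one := perp_unique (perp_spec zero) (zero_oplus' one)

lemma seq_one' (a : E) : SEA.seq a one = a := by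
  have h0 : SEA.seq a zero = SEA.seq zero a := by rw [seq_zero', zero_seq']
  have h := SEA.comm_perp a zero h0
  rw [perp_zero'] at h
  rw [h, SEA.one_seq]

lemma seq_mono {b c : E} (a : E) (h : le b c) : le (SEA.seq a b) (SEA.seq a c) := by
  obtain ⟨d, hd⟩ := h
  exact ⟨SEA.seq a d, SEA.seq_oplus a b d c hd⟩

lemma commutes_zero' (a : E) : Commutes a (zero:E) := by
  show SEA.seq a zero = SEA.seq zero a
  rw [seq_zero', zero_seq']

lemma commutes_symm {a b : E} (h : Commutes a b) : Commutes b a := by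
  unfold Commutes at *; exact h.symm

end SEAbasic

set_option linter.unusedSectionVars false

section Homog
variable {E : Type u} [EffectAlgebra E] [SEA E] [ConvexEA E]

open ConvexEA

lemma L1 (a b : E) (n : ℕ) (hn : 0 < n) :
    ∀ k : ℕ, k ≤ n →
      smul (1/(n:ℝ)) (SEA.seq a (smul ((k:ℝ)/(n:ℝ)) b)) =
        smul ((k:ℝ)/(n:ℝ)) (SEA.seq a (smul (1/(n:ℝ)) b)) := by
  have hnR : (0:ℝ) < (n:ℝ) := by exact_mod_cast hn
  have hpos : (0:ℝ) ≤ 1/(n:ℝ) := by positivity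
  have hle1 : (1:ℝ)/(n:ℝ) ≤ 1 := by
    rw [div_le_one hnR]; exact_mod_cast hn
  intro k
  induction k with
  | zero =>
    intro _
    simp only [Nat.cast_zero, zero_div]
    rw [smul_zero_coeff, seq_zero', smul_zero_right _ hpos hle1, smul_zero_coeff]
  | succ k ih =>
    intro hk1
    have hkn : ((k:ℝ)+1)/(n:ℝ) ≤ 1 := by
      rw [div_le_one hnR]; exact_mod_cast hk1
    have ihh := ih (Nat.le_of_succ_le hk1)
    have hsplit := smul_add_coeff ((k:ℝ)/(n:ℝ)) (1/(n:ℝ)) b (by positivity) hpos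
      (by rw [← add_div, div_le_one hnR]; exact_mod_cast hk1)
    rw [show (k:ℝ)/(n:ℝ) + 1/(n:ℝ) = ((k+1:ℕ):ℝ)/(n:ℝ) by push_cast; ring] at hsplit
    have h2 := SEA.seq_oplus a _ _ _ hsplit
    have h3 := smul_oplus (1/(n:ℝ)) _ _ _ hpos hle1 h2
    rw [ihh] at h3
    have h4 := smul_add_coeff ((k:ℝ)/(n:ℝ)) (1/(n:ℝ)) (SEA.seq a (smul (1/(n:ℝ)) b))
      (by positivity) hpos
      (by rw [← add_div, div_le_one hnR]; exact_mod_cast hk1)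
    rw [show (k:ℝ)/(n:ℝ) + 1/(n:ℝ) = ((k+1:ℕ):ℝ)/(n:ℝ) by push_cast; ring] at h4
    exact Option.some.inj (h3.symm.trans h4)

lemma L2 (a b : E) (n : ℕ) (hn : 0 < n) :
    SEA.seq a (smul (1/(n:ℝ)) b) = smul (1/(n:ℝ)) (SEA.seq a b) := by
  have hnR : (0:ℝ) < (n:ℝ) := by exact_mod_cast hn
  have h := L1 a b n hn n le_rfl
  rw [div_self (ne_of_gt hnR), ConvexEA.one_smul, ConvexEA.one_smul] at h
  exact h.symm

lemma seq_smul_nat (a b : E) (n : ℕ) (hn : 0 < n) : ∀ k : ℕ, k ≤ n →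
    SEA.seq a (smul ((k:ℝ)/(n:ℝ)) b) = smul ((k:ℝ)/(n:ℝ)) (SEA.seq a b) := by
  have hnR : (0:ℝ) < (n:ℝ) := by exact_mod_cast hn
  have hpos : (0:ℝ) ≤ 1/(n:ℝ) := by positivity
  have hle1 : (1:ℝ)/(n:ℝ) ≤ 1 := by rw [div_le_one hnR]; exact_mod_cast hn
  intro k
  induction k with
  | zero =>
    intro _
    simp only [Nat.cast_zero, zero_div]
    rw [smul_zero_coeff, seq_zero', smul_zero_coeff]
  | succ k ih =>
    intro hk1
    have ihh := ih (Nat.le_of_succ_le hk1)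
    have hsplit := smul_add_coeff ((k:ℝ)/(n:ℝ)) (1/(n:ℝ)) b (by positivity) hpos
      (by rw [← add_div, div_le_one hnR]; exact_mod_cast hk1)
    rw [show (k:ℝ)/(n:ℝ) + 1/(n:ℝ) = ((k+1:ℕ):ℝ)/(n:ℝ) by push_cast; ring] at hsplit
    have h2 := SEA.seq_oplus a _ _ _ hsplit
    rw [ihh, L2 a b n hn] at h2
    have h4 := smul_add_coeff ((k:ℝ)/(n:ℝ)) (1/(n:ℝ)) (SEA.seq a b)
      (by positivity) hpos
      (by rw [← add_div, div_le_one hnR]; exact_mod_cast hk1)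
    rw [show (k:ℝ)/(n:ℝ) + 1/(n:ℝ) = ((k+1:ℕ):ℝ)/(n:ℝ) by push_cast; ring] at h4
    exact Option.some.inj (h2.symm.trans h4)

lemma rhomog (harch : StronglyArchimedean E) (a b : E) (l : ℝ) (h0 : 0 ≤ l) (h1 : l ≤ 1) :
    SEA.seq a (smul l b) = smul l (SEA.seq a b) := by
  rcases eq_or_lt_of_le h1 with h1e | h1lt
  · rw [h1e, ConvexEA.one_smul, ConvexEA.one_smul]
  -- bounds for each m
  have key : ∀ m : ℕ, ∃ k : ℕ, ((k:ℝ)+1)/((m:ℝ)+1) ≤ 1 ∧ (k:ℝ)/((m:ℝ)+1) ≤ l ∧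
      l ≤ ((k:ℝ)+1)/((m:ℝ)+1) ∧
      le (smul ((k:ℝ)/((m:ℝ)+1)) (SEA.seq a b)) (SEA.seq a (smul l b)) ∧
      le (SEA.seq a (smul l b)) (smul (((k:ℝ)+1)/((m:ℝ)+1)) (SEA.seq a b)) := by
    intro m
    set N : ℕ := m + 1 with hN
    have hNpos : 0 < N := Nat.succ_pos m
    have hNR : (0:ℝ) < (N:ℝ) := by exact_mod_cast hNpos
    have hNc : ((N:ℕ):ℝ) = (m:ℝ) + 1 := by push_cast [hN]; ring
    set k : ℕ := ⌊l * (N:ℝ)⌋₊ with hk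
    have hfl : ((k:ℝ)) ≤ l * (N:ℝ) := Nat.floor_le (by positivity)
    have hfu : l * (N:ℝ) < (k:ℝ) + 1 := Nat.lt_floor_add_one _
    have hkN : (k:ℝ) + 1 ≤ (N:ℝ) := by
      have : (k:ℝ) < (N:ℝ) := lt_of_le_of_lt hfl (by nlinarith)
      have hkNn : k < N := by exact_mod_cast this
      exact_mod_cast hkNn
    have hb1 : (k:ℝ)/(N:ℝ) ≤ l := by rw [div_le_iff₀ hNR]; exact hfl
    have hb2 : l ≤ ((k:ℝ)+1)/(N:ℝ) := by rw [le_div_iff₀ hNR]; linarith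
    have hcoef1 : ((k:ℝ)+1)/(N:ℝ) ≤ 1 := by rw [div_le_one hNR]; exact hkN
    have hcoef0 : (k:ℝ)/(N:ℝ) ≤ 1 := by rw [div_le_one hNR]; linarith
    have hcast : ((k+1:ℕ):ℝ)/(N:ℝ) = ((k:ℝ)+1)/(N:ℝ) := by push_cast; ring
    have hkn1 : k + 1 ≤ N := by exact_mod_cast hkN
    -- lower bound
    have hlow : le (smul ((k:ℝ)/(N:ℝ)) (SEA.seq a b)) (SEA.seq a (smul l b)) := by
      rw [← seq_smul_nat a b N hNpos k (Nat.le_of_succ_le hkn1)]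
      exact seq_mono a (smul_le_coeff b (by positivity) hb1 h1)
    have hup : le (SEA.seq a (smul l b)) (smul (((k:ℝ)+1)/(N:ℝ)) (SEA.seq a b)) := by
      rw [← hcast, ← seq_smul_nat a b N hNpos (k+1) hkn1]
      exact seq_mono a (smul_le_coeff b h0 (hcast ▸ hb2) (hcast ▸ hcoef1))
    rw [hNc] at hlow hup hb1 hb2 hcoef1
    exact ⟨k, hcoef1, hb1, hb2, hlow, hup⟩
  apply le_antisymm'
  · apply arch_master harch
    intro m
    obtain ⟨k, hc1, hkl, hlk, hlo, hup⟩ := key m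
    exact ⟨SEA.seq a b, ((k:ℝ)+1)/((m:ℝ)+1), l, by positivity, hc1, h0, h1,
      by have hsplitc : ((k:ℝ)+1)/((m:ℝ)+1) = (k:ℝ)/((m:ℝ)+1) + 1/((m:ℝ)+1) := (by ring); linarith, hup,
      le_refl' _⟩
  · apply arch_master harch
    intro m
    obtain ⟨k, hc1, hkl, hlk, hlo, hup⟩ := key m
    refine ⟨SEA.seq a b, ((k:ℝ)+1)/((m:ℝ)+1), (k:ℝ)/((m:ℝ)+1), by positivity, hc1,
      by positivity, le_trans hkl h1, by have hsplitc : ((k:ℝ)+1)/((m:ℝ)+1) = (k:ℝ)/((m:ℝ)+1) + 1/((m:ℝ)+1) := (by ring); linarith, ?_, hlo⟩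
    exact le_trans' (smul_le_coeff (SEA.seq a b) h0 hlk hc1) (le_refl' _)

end Homog

section Central
variable {E : Type u} [EffectAlgebra E] [SEA E] [ConvexEA E]

open ConvexEA

lemma comm_chain (b c : E) (n : ℕ) (hn : 0 < n) (hbase : Commutes b (smul (1/(n:ℝ)) c)) :
    ∀ k : ℕ, k ≤ n → Commutes b (smul ((k:ℝ)/(n:ℝ)) c) := by
  have hnR : (0:ℝ) < (n:ℝ) := by exact_mod_cast hn
  have hpos : (0:ℝ) ≤ 1/(n:ℝ) := by positivity
  intro k
  induction k with
  | zero =>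
    intro _
    simp only [Nat.cast_zero, zero_div]
    rw [smul_zero_coeff]
    exact commutes_zero' b
  | succ k ih =>
    intro hk1
    have hsplit := smul_add_coeff ((k:ℝ)/(n:ℝ)) (1/(n:ℝ)) c (by positivity) hpos
      (by rw [← add_div, div_le_one hnR]; exact_mod_cast hk1)
    rw [show (k:ℝ)/(n:ℝ) + 1/(n:ℝ) = ((k+1:ℕ):ℝ)/(n:ℝ) by push_cast; ring] at hsplit
    exact SEA.comm_oplus _ _ _ _ (ih (Nat.le_of_succ_le hk1)) hbase hsplit

lemma comm_frac_self (c : E) (n : ℕ) (hn : 0 < n) : Commutes (smul (1/(n:ℝ)) c) c := by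
  have hnR : (0:ℝ) < (n:ℝ) := by exact_mod_cast hn
  have h := comm_chain (smul (1/(n:ℝ)) c) c n hn (by rfl) n le_rfl
  rw [div_self (ne_of_gt hnR), ConvexEA.one_smul] at h
  exact h

lemma comm_base_perp (b : E) (n : ℕ) (hn : 0 < n) :
    Commutes b (smul (1/(n:ℝ)) (perp b)) := by
  have hnR : (0:ℝ) < (n:ℝ) := by exact_mod_cast hn
  have hpos : (0:ℝ) ≤ 1/(n:ℝ) := by positivity
  have hle1 : (1:ℝ)/(n:ℝ) ≤ 1 := by rw [div_le_one hnR]; exact_mod_cast hn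
  have h1 : SEA.seq (smul (1/(n:ℝ)) (perp b)) (perp b)
      = SEA.seq (perp b) (smul (1/(n:ℝ)) (perp b)) := comm_frac_self (perp b) n hn
  have hL2 : SEA.seq (perp b) (smul (1/(n:ℝ)) (perp b))
      = smul (1/(n:ℝ)) (SEA.seq (perp b) (perp b)) := L2 (perp b) (perp b) n hn
  have h2 := SEA.seq_oplus (smul (1/(n:ℝ)) (perp b)) b (perp b) one (perp_spec b)
  rw [seq_one'] at h2
  have h3 := SEA.seq_oplus (perp b) b (perp b) one (perp_spec b)
  rw [seq_one'] at h3
  have h4 := smul_oplus (1/(n:ℝ)) _ _ _ hpos hle1 h3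
  rw [h1.trans hL2] at h2
  have h5 : SEA.seq (smul (1/(n:ℝ)) (perp b)) b = smul (1/(n:ℝ)) (SEA.seq (perp b) b) :=
    cancel_left h2 h4
  have h6 : SEA.seq b (smul (1/(n:ℝ)) (perp b)) = smul (1/(n:ℝ)) (SEA.seq b (perp b)) :=
    L2 b (perp b) n hn
  have h7 : SEA.seq b (perp b) = SEA.seq (perp b) b := SEA.comm_perp b b rfl
  show SEA.seq b (smul (1/(n:ℝ)) (perp b)) = SEA.seq (smul (1/(n:ℝ)) (perp b)) b
  rw [h6, h7, h5]

lemma comm_scalar_rat (b : E) (n : ℕ) (hn : 0 < n) (k : ℕ) (hk : k ≤ n) :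
    Commutes b (smul ((k:ℝ)/(n:ℝ)) one) := by
  have hnR : (0:ℝ) < (n:ℝ) := by exact_mod_cast hn
  have hb : Commutes b (smul ((k:ℝ)/(n:ℝ)) b) :=
    comm_chain b b n hn (commutes_symm (comm_frac_self b n hn)) k hk
  have hpb : Commutes b (smul ((k:ℝ)/(n:ℝ)) (perp b)) :=
    comm_chain b (perp b) n hn (comm_base_perp b n hn) k hk
  have hsplit := smul_oplus ((k:ℝ)/(n:ℝ)) b (perp b) one (by positivity)
    (by rw [div_le_one hnR]; exact_mod_cast hk) (perp_spec b)
  exact SEA.comm_oplus _ _ _ _ hb hpb hsplit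

lemma scalar_central (harch : StronglyArchimedean E) (hA : PropertyA E)
    (l : ℝ) (h0 : 0 ≤ l) (h1 : l ≤ 1) (b : E) : Commutes (smul l one) b := by
  have h2R : ∀ n : ℕ, (0:ℝ) < ((2^n : ℕ):ℝ) := fun n => by
    exact_mod_cast pow_pos (by norm_num : (0:ℕ) < 2) n
  have hql : ∀ n : ℕ, ((⌊l * ((2^n : ℕ):ℝ)⌋₊ : ℕ):ℝ) ≤ l * ((2^n : ℕ):ℝ) := fun n =>
    Nat.floor_le (by positivity)
  have hqu : ∀ n : ℕ, l * ((2^n : ℕ):ℝ) < (⌊l * ((2^n : ℕ):ℝ)⌋₊ : ℕ) + 1 := fun n =>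
    Nat.lt_floor_add_one _
  have hqle : ∀ n : ℕ, ⌊l * ((2^n : ℕ):ℝ)⌋₊ ≤ 2^n := by
    intro n
    have h := Nat.floor_mono (R := ℝ) (show l * ((2^n : ℕ):ℝ) ≤ ((2^n:ℕ):ℝ) by nlinarith [h2R n])
    rwa [Nat.floor_natCast] at h
  have hcoef1 : ∀ n : ℕ, ((⌊l * ((2^n : ℕ):ℝ)⌋₊ : ℕ):ℝ)/((2^n : ℕ):ℝ) ≤ 1 := fun n => by
    rw [div_le_one (h2R n)]; exact_mod_cast hqle n
  have hcoef0 : ∀ n : ℕ, (0:ℝ) ≤ ((⌊l * ((2^n : ℕ):ℝ)⌋₊ : ℕ):ℝ)/((2^n : ℕ):ℝ) := fun n => by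
    positivity
  have hcl : ∀ n : ℕ, ((⌊l * ((2^n : ℕ):ℝ)⌋₊ : ℕ):ℝ)/((2^n : ℕ):ℝ) ≤ l := fun n => by
    rw [div_le_iff₀ (h2R n)]; exact hql n
  have hasc : ∀ n : ℕ, le (smul (((⌊l * ((2^n : ℕ):ℝ)⌋₊ : ℕ):ℝ)/((2^n : ℕ):ℝ)) (one:E))
      (smul (((⌊l * ((2^(n+1) : ℕ):ℝ)⌋₊ : ℕ):ℝ)/((2^(n+1) : ℕ):ℝ)) (one:E)) := by
    intro n
    have hmono2 : 2 * ⌊l * ((2^n : ℕ):ℝ)⌋₊ ≤ ⌊l * ((2^(n+1) : ℕ):ℝ)⌋₊ := by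
      apply Nat.le_floor
      have h5 := hql n
      push_cast at h5 ⊢
      have h6 : (2:ℝ)^(n+1) = 2^n * 2 := pow_succ 2 n
      nlinarith [h5, h6]
    apply smul_le_coeff one (hcoef0 n) _ (hcoef1 (n+1))
    rw [div_le_div_iff₀ (h2R n) (h2R (n+1))]
    have hc : ((2^(n+1) : ℕ):ℝ) = 2 * ((2^n : ℕ):ℝ) := by push_cast; ring
    have h2 : (2:ℝ) * ((⌊l * ((2^n : ℕ):ℝ)⌋₊ : ℕ):ℝ) ≤ ((⌊l * ((2^(n+1) : ℕ):ℝ)⌋₊ : ℕ):ℝ) := by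
      exact_mod_cast hmono2
    have h3 : (0:ℝ) ≤ ((⌊l * ((2^n : ℕ):ℝ)⌋₊ : ℕ):ℝ) := Nat.cast_nonneg _
    nlinarith [mul_le_mul_of_nonneg_right h2 (le_of_lt (h2R n)), hc, h3, h2R n]
  have hsup : IsSupSeq (fun n => smul (((⌊l * ((2^n : ℕ):ℝ)⌋₊ : ℕ):ℝ)/((2^n : ℕ):ℝ)) (one:E))
      (smul l one) := by
    constructor
    · intro n; exact smul_le_coeff one (hcoef0 n) (hcl n) h1
    · intro c hc
      apply arch_master harch
      intro m
      have hpow : ((m:ℝ)+1) ≤ ((2^(m+1) : ℕ):ℝ) := by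
        have h := Nat.lt_two_pow_self (n := m+1)
        have h' : (m+1 : ℕ) ≤ 2^(m+1) := le_of_lt h
        exact_mod_cast h'
      have hfrac : 1/((2^(m+1):ℕ):ℝ) ≤ 1/((m:ℝ)+1) :=
        one_div_le_one_div_of_le (by positivity) hpow
      have hlu : l ≤ ((⌊l * ((2^(m+1) : ℕ):ℝ)⌋₊ : ℕ):ℝ)/((2^(m+1):ℕ):ℝ) + 1/((2^(m+1):ℕ):ℝ) := by
        rw [← add_div, le_div_iff₀ (h2R (m+1))]
        linarith [hqu (m+1)]
      exact ⟨one, l, ((⌊l * ((2^(m+1) : ℕ):ℝ)⌋₊ : ℕ):ℝ)/((2^(m+1):ℕ):ℝ), h0, h1,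
        hcoef0 (m+1), hcoef1 (m+1), by linarith, le_refl' _, hc (m+1)⟩
  have hmut : ∀ m' n' : ℕ,
      Commutes (smul (((⌊l * ((2^m' : ℕ):ℝ)⌋₊ : ℕ):ℝ)/((2^m' : ℕ):ℝ)) (one:E))
        (smul (((⌊l * ((2^n' : ℕ):ℝ)⌋₊ : ℕ):ℝ)/((2^n' : ℕ):ℝ)) (one:E)) :=
    fun m' n' => comm_scalar_rat _ (2^n') (pow_pos (by norm_num) n') _ (hqle n')
  have hcomm : ∀ n : ℕ,
      Commutes (smul (((⌊l * ((2^n : ℕ):ℝ)⌋₊ : ℕ):ℝ)/((2^n : ℕ):ℝ)) (one:E)) b :=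
    fun n => commutes_symm (comm_scalar_rat b (2^n) (pow_pos (by norm_num) n) _ (hqle n))
  exact hA _ _ b hasc hmut hsup hcomm

lemma scalar_seq (harch : StronglyArchimedean E) (hA : PropertyA E)
    (l : ℝ) (h0 : 0 ≤ l) (h1 : l ≤ 1) (b : E) : SEA.seq (smul l one) b = smul l b := by
  have hc : SEA.seq (smul l one) b = SEA.seq b (smul l one) := scalar_central harch hA l h0 h1 b
  rw [hc, rhomog harch b one l h0 h1, seq_one']

end Central

end Stmt7Aux

open EffectAlgebra in
/-- in a strongly archimedean convex SEA with property A, the sequential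
product is homogeneous in both arguments, and `a|b` implies `a|(λb)`. -/
theorem stmt7 {E : Type u} [EffectAlgebra E] [SEA E] [ConvexEA E]
    (harch : StronglyArchimedean E) (hA : PropertyA E)
    (a b : E) (l : ℝ) (h0 : 0 ≤ l) (h1 : l ≤ 1) :
    SEA.seq a (ConvexEA.smul l b) = ConvexEA.smul l (SEA.seq a b) ∧
    SEA.seq (ConvexEA.smul l a) b = ConvexEA.smul l (SEA.seq a b) ∧
    (Commutes a b → Commutes a (ConvexEA.smul l b)) := by
  refine ⟨Stmt7Aux.rhomog harch a b l h0 h1, ?_, ?_⟩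
  · have hsa := Stmt7Aux.scalar_seq harch hA l h0 h1 a
    have hc : SEA.seq (ConvexEA.smul l one) a = SEA.seq a (ConvexEA.smul l one) :=
      Stmt7Aux.scalar_central harch hA l h0 h1 a
    have hassoc := SEA.comm_assoc (ConvexEA.smul l one) a b hc
    rw [hsa] at hassoc
    rw [← hassoc]
    exact Stmt7Aux.scalar_seq harch hA l h0 h1 (SEA.seq a b)
  · intro hab
    have hc0 : SEA.seq (ConvexEA.smul l one) a = SEA.seq a (ConvexEA.smul l one) :=
      Stmt7Aux.scalar_central harch hA l h0 h1 a
    have h2 := SEA.comm_seq (ConvexEA.smul l one) b a hc0.symm hab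
    rw [Stmt7Aux.scalar_seq harch hA l h0 h1 b] at h2
    exact h2
end
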